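/- arXiv:1604.07062 — 2 statements merged into one kernel-verified Lean document; each statement's English description precedes it below -/
import Mathlib

section
/- For the gadget g(x,y) := x₁ + y₁ + x₂y₂ + x₃y₃ (mod 2), and each b ∈ {0,1}, the digraph 𝒢^b whose nodes are the b-inputs of g, with an edge from (x,y) to (x',y') iff x = x' or y = y', is strongly connected. -/
/-- The gadget g(x,y) = x₁ + y₁ + x₂y₂ + x₃y₃ (mod 2). -/
def gadget (x y : Fin 3 → ZMod 2) : ZMod 2 :=
  x 0 + y 0 + x 1 * y 1 + x 2 * y 2

lemma exists_common_scalar (b a0 a1 a2 c0 c1 c2 : ZMod 2)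
    (h : ¬(a1 = c1 ∧ a2 = c2 ∧ a0 ≠ c0)) :
    ∃ y0 y1 y2 : ZMod 2,
      a0 + y0 + a1 * y1 + a2 * y2 = b ∧ c0 + y0 + c1 * y1 + c2 * y2 = b := by
  revert h; revert b a0 a1 a2 c0 c1 c2; decide

lemma exists_common (b : ZMod 2) (x x' : Fin 3 → ZMod 2)
    (h : ¬(x 1 = x' 1 ∧ x 2 = x' 2 ∧ x 0 ≠ x' 0)) :
    ∃ y : Fin 3 → ZMod 2, gadget x y = b ∧ gadget x' y = b := by
  obtain ⟨y0, y1, y2, h1, h2⟩ :=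
    exists_common_scalar b (x 0) (x 1) (x 2) (x' 0) (x' 1) (x' 2) h
  exact ⟨![y0, y1, y2], by simpa [gadget] using h1, by simpa [gadget] using h2⟩

lemma reach_common (b : ZMod 2)
    (p q : {pq : (Fin 3 → ZMod 2) × (Fin 3 → ZMod 2) // gadget pq.1 pq.2 = b})
    (y : Fin 3 → ZMod 2) (h1 : gadget p.1.1 y = b) (h2 : gadget q.1.1 y = b) :
    Relation.ReflTransGen
      (fun a c : {pq : (Fin 3 → ZMod 2) × (Fin 3 → ZMod 2) // gadget pq.1 pq.2 = b} =>
        a.1.1 = c.1.1 ∨ a.1.2 = c.1.2) p q := by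
  have s1 : Relation.ReflTransGen
      (fun a c : {pq : (Fin 3 → ZMod 2) × (Fin 3 → ZMod 2) // gadget pq.1 pq.2 = b} =>
        a.1.1 = c.1.1 ∨ a.1.2 = c.1.2) p ⟨(p.1.1, y), h1⟩ :=
    Relation.ReflTransGen.single (Or.inl rfl)
  have s2 : Relation.ReflTransGen
      (fun a c : {pq : (Fin 3 → ZMod 2) × (Fin 3 → ZMod 2) // gadget pq.1 pq.2 = b} =>
        a.1.1 = c.1.1 ∨ a.1.2 = c.1.2) ⟨(p.1.1, y), h1⟩ ⟨(q.1.1, y), h2⟩ :=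
    Relation.ReflTransGen.single (Or.inr rfl)
  have s3 : Relation.ReflTransGen
      (fun a c : {pq : (Fin 3 → ZMod 2) × (Fin 3 → ZMod 2) // gadget pq.1 pq.2 = b} =>
        a.1.1 = c.1.1 ∨ a.1.2 = c.1.2) (⟨(q.1.1, y), h2⟩) q :=
    Relation.ReflTransGen.single (Or.inl rfl)
  exact (s1.trans s2).trans s3

/-- For each b ∈ {0,1}, the digraph 𝒢^b on the b-inputs of the gadget, with an edge from
(x,y) to (x',y') iff x = x' or y = y', is strongly connected: every node reaches every
node via directed edges. -/
theorem stmt8 (b : ZMod 2)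
    (p q : {pq : (Fin 3 → ZMod 2) × (Fin 3 → ZMod 2) // gadget pq.1 pq.2 = b}) :
    Relation.ReflTransGen
      (fun a c : {pq : (Fin 3 → ZMod 2) × (Fin 3 → ZMod 2) // gadget pq.1 pq.2 = b} =>
        a.1.1 = c.1.1 ∨ a.1.2 = c.1.2) p q := by
  by_cases hbad : p.1.1 1 = q.1.1 1 ∧ p.1.1 2 = q.1.1 2 ∧ p.1.1 0 ≠ q.1.1 0
  · -- go through an intermediate x'' differing from both in coordinate 1
    set x'' : Fin 3 → ZMod 2 := ![p.1.1 0, p.1.1 1 + 1, p.1.1 2] with hx''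
    have hne1 : x'' 1 ≠ p.1.1 1 := by
      simp only [hx'', Matrix.cons_val_one, Matrix.head_cons, Matrix.cons_val_zero]
      intro h
      have : (1 : ZMod 2) = 0 := by linear_combination h
      exact one_ne_zero this
    obtain ⟨y1, hy1p, hy1m⟩ := exists_common b p.1.1 x'' (fun h => hne1 h.1.symm)
    obtain ⟨y2, hy2m, hy2q⟩ := exists_common b x'' q.1.1 (by
      intro h
      exact hne1 (h.1.trans hbad.1.symm))
    let m : {pq : (Fin 3 → ZMod 2) × (Fin 3 → ZMod 2) // gadget pq.1 pq.2 = b} :=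
      ⟨(x'', y1), hy1m⟩
    have r1 := reach_common b p m y1 hy1p hy1m
    have r2 := reach_common b m q y2 hy2m hy2q
    exact r1.trans r2
  · obtain ⟨y, hy1, hy2⟩ := exists_common b p.1.1 q.1.1 hbad
    exact reach_common b p q y hy1 hy2
end

section
/- Let D be a finite digraph with a self-loop at every node, and suppose (ignoring self-loops) D has a closed eulerian tour visiting each node the same number of times and using each of the L non-self-loop edges exactly once. Then there exists a probability distribution over walks v_{i_0}, v_{i_1}, …, v_{i_{2L}} of length 2L in D such that: (i) the first node v_{i_0} and last node v_{i_{2L}} are independent and each uniformly distributed over the nodes of the tour sequence; and (ii) each of the 2L consecutive edges of the walk is marginally distributed as a uniform mixture putting mass 1/2 uniformly on self-loops and mass 1/2 uniformly on non-self-loop edges. -/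
open Finset

namespace Stmt15Aux

def sVal (L : ℕ) (s : Fin (2 * L)) : ℕ := if (s : ℕ) < L then (s : ℕ) else (s : ℕ) + 1

lemma sVal_le {L : ℕ} (s : Fin (2 * L)) : sVal L s ≤ 2 * L := by
  have := s.isLt; unfold sVal; split <;> omega

section

variable {L : ℕ} [NeZero L]

instance : NeZero (2 * L) := ⟨by have := NeZero.ne L; omega⟩

lemma card_val_lt (m : ℕ) (hm : m ≤ 2 * L) :
    (univ.filter fun x : ZMod (2 * L) => x.val < m).card = m := by
  trans (range m).card
  · refine Finset.card_nbij' (i := fun x => x.val) (j := fun t => ((t : ZMod (2 * L)))) ?_ ?_ ?_ ?_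
    · intro x hx; simpa using (Finset.mem_filter.mp hx).2
    · intro t ht
      simp only [mem_coe, mem_filter, mem_univ, true_and]
      rw [ZMod.val_cast_of_lt (lt_of_lt_of_le (mem_range.mp ht) hm)]
      exact mem_range.mp ht
    · intro x _; exact ZMod.natCast_rightInverse x
    · intro t ht; exact ZMod.val_cast_of_lt (lt_of_lt_of_le (mem_range.mp ht) hm)
  · exact card_range m

def adv (s : Fin (2 * L)) (r : ZMod (2 * L)) (t : ℕ) : Prop :=
  ((t : ZMod (2 * L)) - r).val < sVal L s

instance (s : Fin (2 * L)) (r : ZMod (2 * L)) : DecidablePred (adv s r) :=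
  fun _ => inferInstanceAs (Decidable (_ < _))

lemma card_adv (s : Fin (2 * L)) (t : ℕ) :
    (univ.filter fun r : ZMod (2 * L) => adv s r t).card = sVal L s := by
  rw [← card_val_lt (sVal L s) (sVal_le s)]
  refine Finset.card_nbij' (i := fun r => ((t : ZMod (2 * L)) - r))
      (j := fun x => ((t : ZMod (2 * L)) - x)) ?_ ?_ ?_ ?_
  · intro r hr; simp only [mem_coe, mem_filter, mem_univ, true_and]
    exact (Finset.mem_filter.mp hr).2
  · intro x hx; simp only [mem_coe, mem_filter, mem_univ, true_and]
    show adv s ((t : ZMod (2 * L)) - x) t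
    unfold adv
    rw [sub_sub_cancel]
    exact (Finset.mem_filter.mp hx).2
  · intro r _; exact sub_sub_cancel _ _
  · intro x _; exact sub_sub_cancel _ _

lemma card_not_adv (s : Fin (2 * L)) (t : ℕ) :
    (univ.filter fun r : ZMod (2 * L) => ¬ adv s r t).card = 2 * L - sVal L s := by
  have h := Finset.card_filter_add_card_filter_not
    (s := (univ : Finset (ZMod (2 * L)))) (p := fun r => adv s r t)
  rw [card_adv] at h
  rw [Finset.card_univ, ZMod.card] at h
  omega

def cnt (s : Fin (2 * L)) (r : ZMod (2 * L)) (k : ℕ) : ℕ :=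
  ((range k).filter (adv s r)).card

omit [NeZero L] in
lemma cnt_zero (s : Fin (2 * L)) (r : ZMod (2 * L)) : cnt s r 0 = 0 := by
  simp [cnt]

omit [NeZero L] in
lemma cnt_succ (s : Fin (2 * L)) (r : ZMod (2 * L)) (k : ℕ) :
    cnt s r (k + 1) = cnt s r k + (if adv s r k then 1 else 0) := by
  unfold cnt
  rw [Finset.range_add_one, Finset.filter_insert]
  split
  · rw [Finset.card_insert_of_notMem
      (fun h => Finset.notMem_range_self (Finset.mem_of_mem_filter _ h))]
  · simp

lemma cnt_total (s : Fin (2 * L)) (r : ZMod (2 * L)) : cnt s r (2 * L) = sVal L s := by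
  unfold cnt
  rw [← card_val_lt (sVal L s) (sVal_le s)]
  refine Finset.card_nbij' (i := fun u : ℕ => ((u : ZMod (2 * L)) - r)) (j := fun x => (x + r).val) ?_ ?_ ?_ ?_
  · intro u hu; simp only [mem_coe, mem_filter, mem_univ, true_and]
    exact (Finset.mem_filter.mp hu).2
  · intro x hx
    simp only [mem_coe, mem_filter, mem_range]
    constructor
    · exact ZMod.val_lt _
    · show adv s r (x + r).val
      unfold adv
      rw [ZMod.natCast_rightInverse (x + r), add_sub_cancel_right]
      exact (Finset.mem_filter.mp hx).2
  · intro u hu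
    have hu' : u < 2 * L := mem_range.mp (Finset.mem_of_mem_filter _ hu)
    show ((u : ZMod (2 * L)) - r + r).val = u
    rw [sub_add_cancel, ZMod.val_cast_of_lt hu']
  · intro x _
    show (((x + r).val : ℕ) : ZMod (2 * L)) - r = x
    rw [ZMod.natCast_rightInverse (x + r), add_sub_cancel_right]


lemma sum_range_zmod (g : ZMod L → ℝ) :
    ∑ t ∈ range L, g ((t : ℕ) : ZMod L) = ∑ d : ZMod L, g d := by
  apply Finset.sum_nbij' (i := fun t => ((t : ℕ) : ZMod L)) (j := fun d => d.val)
  · intro t _; exact mem_univ _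
  · intro d _; exact mem_range.mpr (ZMod.val_lt d)
  · intro t ht; exact ZMod.val_cast_of_lt (mem_range.mp ht)
  · intro d _; exact ZMod.natCast_rightInverse d
  · intro t _; rfl

lemma sum_sVal_cast (g : ZMod L → ℝ) :
    ∑ s : Fin (2 * L), g ((sVal L s : ℕ) : ZMod L) = 2 * ∑ d : ZMod L, g d := by
  have h0 : ∑ s : Fin (2 * L), g ((sVal L s : ℕ) : ZMod L)
      = ∑ t ∈ range (2 * L), g (((if t < L then t else t + 1 : ℕ)) : ZMod L) := by
    rw [← Fin.sum_univ_eq_sum_range]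
    rfl
  rw [h0]
  rw [show 2 * L = L + L by ring, Finset.sum_range_add]
  have h1 : ∀ t ∈ range L, g (((if t < L then t else t + 1 : ℕ)) : ZMod L)
      = g ((t : ℕ) : ZMod L) := by
    intro t ht; rw [if_pos (mem_range.mp ht)]
  have h2 : ∀ t ∈ range L, g (((if L + t < L then L + t else L + t + 1 : ℕ)) : ZMod L)
      = g (((t : ℕ) : ZMod L) + 1) := by
    intro t _
    rw [if_neg (by omega)]
    congr 1
    push_cast
    rw [ZMod.natCast_self]
    ring
  rw [Finset.sum_congr rfl h1, Finset.sum_congr rfl h2, sum_range_zmod,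
    sum_range_zmod (fun d => g (d + 1))]
  rw [two_mul]
  congr 1
  exact Fintype.sum_equiv (Equiv.addRight (1 : ZMod L)) _ _ (fun d => rfl)

omit [NeZero L] in
lemma sum_sVal : ∑ s : Fin (2 * L), sVal L s = 2 * (L * L) := by
  have h0 : ∑ s : Fin (2 * L), sVal L s
      = ∑ t ∈ range (2 * L), (if t < L then t else t + 1) := by
    rw [← Fin.sum_univ_eq_sum_range]
    rfl
  rw [h0, show 2 * L = L + L by ring, Finset.sum_range_add]
  have h1 : ∀ t ∈ range L, (if t < L then t else t + 1) = t := by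
    intro t ht; rw [if_pos (mem_range.mp ht)]
  have h2 : ∀ t ∈ range L, (if L + t < L then L + t else L + t + 1) = L + t + 1 := by
    intro t _; rw [if_neg (by omega)]
  rw [Finset.sum_congr rfl h1, Finset.sum_congr rfl h2]
  have h3 : ∑ t ∈ range L, (L + t + 1) = (∑ t ∈ range L, t) + L * (L + 1) := by
    rw [Finset.sum_add_distrib, Finset.sum_add_distrib, Finset.sum_const, Finset.sum_const,
      Finset.card_range]
    simp [mul_comm]
    ring
  rw [h3]
  have h4 := Finset.sum_range_id_mul_two L
  have h5 : L * (L - 1) = L * L - L := by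
    cases L with
    | zero => simp
    | succ n =>
      rw [Nat.mul_sub, mul_one]
  rw [h5] at h4
  have h6 : L * (L + 1) = L * L + L := by ring
  have h7 : L ≤ L * L := by
    cases L with
    | zero => simp
    | succ n => exact Nat.le_mul_of_pos_left _ (Nat.succ_pos n)
  omega

omit [NeZero L] in
lemma sum_sVal_compl : ∑ s : Fin (2 * L), (2 * L - sVal L s) = 2 * (L * L) := by
  have h1 : (∑ s : Fin (2 * L), (2 * L - sVal L s)) + (∑ s : Fin (2 * L), sVal L s)
      = ∑ s : Fin (2 * L), (2 * L) := by
    rw [← Finset.sum_add_distrib]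
    exact Finset.sum_congr rfl fun s _ => Nat.sub_add_cancel (sVal_le s)
  rw [sum_sVal] at h1
  rw [Finset.sum_const, Finset.card_univ, Fintype.card_fin, smul_eq_mul] at h1
  have h2 : 2 * L * (2 * L) = 4 * (L * L) := by ring
  omega

end
end Stmt15Aux

open Stmt15Aux Finset

/-- Let D be a finite digraph (relation `rel`) with a self-loop at every node, admitting a
closed eulerian tour `tour : ZMod L → N` that uses each of the L non-self-loop edges
exactly once and visits each node equally often. Then there is a probability distribution
μ over walks of length 2L in D such that (i) the first and last nodes are independent and
each uniform over the nodes, and (ii) each of the 2L consecutive edges of the walk is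
marginally distributed as: mass 1/2 spread uniformly over the self-loops (one per node)
and mass 1/2 spread uniformly over the L non-self-loop edges. -/
theorem stmt15 {N : Type*} [Fintype N] [DecidableEq N]
    (rel : N → N → Prop) (hself : ∀ n, rel n n)
    (L : ℕ) [NeZero L] (tour : ZMod L → N)
    (hstep : ∀ i : ZMod L, rel (tour i) (tour (i + 1)) ∧ tour i ≠ tour (i + 1))
    (hinj : Function.Injective (fun i : ZMod L => (tour i, tour (i + 1))))
    (hsurj : ∀ a b : N, rel a b → a ≠ b → ∃ i : ZMod L, tour i = a ∧ tour (i + 1) = b)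
    (hequal : ∀ n : N,
      (Finset.univ.filter (fun i : ZMod L => tour i = n)).card * Fintype.card N = L) :
    ∃ μ : (Fin (2 * L + 1) → N) → ℝ,
      (∀ w, 0 ≤ μ w) ∧
      (∑ w, μ w = 1) ∧
      (∀ w, μ w ≠ 0 → ∀ j : Fin (2 * L), rel (w j.castSucc) (w j.succ)) ∧
      (∀ a b : N,
        ∑ w ∈ Finset.univ.filter
            (fun w : Fin (2 * L + 1) → N => w 0 = a ∧ w (Fin.last (2 * L)) = b), μ w
          = (1 / (Fintype.card N : ℝ)) ^ 2) ∧
      (∀ j : Fin (2 * L), ∀ a : N,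
        ∑ w ∈ Finset.univ.filter
            (fun w : Fin (2 * L + 1) → N => w j.castSucc = a ∧ w j.succ = a), μ w
          = 1 / (2 * (Fintype.card N : ℝ))) ∧
      (∀ j : Fin (2 * L), ∀ a b : N, rel a b → a ≠ b →
        ∑ w ∈ Finset.univ.filter
            (fun w : Fin (2 * L + 1) → N => w j.castSucc = a ∧ w j.succ = b), μ w
          = 1 / (2 * (L : ℝ))) := by
  classical
  have hL0 : L ≠ 0 := NeZero.ne L
  have hLr : (L : ℝ) ≠ 0 := Nat.cast_ne_zero.mpr hL0
  haveI : Nonempty N := ⟨tour 0⟩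
  have hNr : (Fintype.card N : ℝ) ≠ 0 := Nat.cast_ne_zero.mpr Fintype.card_ne_zero
  set wt : ℝ := 1 / (4 * (L : ℝ) ^ 3) with hwt
  have hwtnn : 0 ≤ wt := by positivity
  set W : ZMod L × Fin (2 * L) × ZMod (2 * L) → (Fin (2 * L + 1) → N) :=
    fun p k => tour (p.1 + (cnt p.2.1 p.2.2 (k : ℕ) : ZMod L)) with hWdef
  -- cast of hequal
  have hcA : ∀ a : N, ((univ.filter fun i : ZMod L => tour i = a).card : ℝ)
      = (L : ℝ) / (Fintype.card N : ℝ) := by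
    intro a
    rw [eq_div_iff hNr]
    exact_mod_cast hequal a
  have hedge : ∀ a b : N, rel a b → a ≠ b →
      (univ.filter fun m : ZMod L => tour m = a ∧ tour (m + 1) = b).card = 1 := by
    intro a b hr hab
    obtain ⟨m, hm1, hm2⟩ := hsurj a b hr hab
    rw [Finset.card_eq_one]
    refine ⟨m, Finset.eq_singleton_iff_unique_mem.mpr ⟨by simp [hm1, hm2], ?_⟩⟩
    intro x hx
    simp only [Finset.mem_filter, Finset.mem_univ, true_and] at hx
    apply hinj
    show (tour x, tour (x + 1)) = (tour m, tour (m + 1))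
    rw [hx.1, hx.2, hm1, hm2]
  -- generic: sum of indicator over ZMod L
  have sumIte : ∀ (q : ZMod L → Prop) (_ : DecidablePred q) (c : ℝ),
      (∑ m : ZMod L, if q m then c else 0) = ((univ.filter q).card : ℝ) * c := by
    intro q _ c
    rw [← Finset.sum_filter, Finset.sum_const, nsmul_eq_mul]
  have sumIteR : ∀ (s : Fin (2 * L)) (t : ℕ) (c : ℝ),
      (∑ r : ZMod (2 * L), if adv s r t then c else 0) = ((sVal L s : ℕ) : ℝ) * c := by
    intro s t c
    rw [← Finset.sum_filter, Finset.sum_const, nsmul_eq_mul, card_adv]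
  have sumIteRn : ∀ (s : Fin (2 * L)) (t : ℕ) (c : ℝ),
      (∑ r : ZMod (2 * L), if ¬ adv s r t then c else 0)
        = ((2 * L - sVal L s : ℕ) : ℝ) * c := by
    intro s t c
    rw [← Finset.sum_filter, Finset.sum_const, nsmul_eq_mul, card_not_adv]
  refine ⟨fun w => ∑ p, if W p = w then wt else 0, ?_, ?_, ?_, ?_, ?_, ?_⟩
  · -- nonneg
    intro w
    exact Finset.sum_nonneg fun p _ => by split; exacts [hwtnn, le_rfl]
  · -- total mass 1
    show (∑ w : Fin (2 * L + 1) → N, ∑ p, if W p = w then wt else 0) = 1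
    rw [Finset.sum_comm]
    have h1 : ∀ p, (∑ w : Fin (2 * L + 1) → N, if W p = w then wt else 0) = wt := by
      intro p
      rw [Finset.sum_ite_eq]
      simp
    rw [Finset.sum_congr rfl fun p _ => h1 p, Finset.sum_const, Finset.card_univ]
    rw [Fintype.card_prod, Fintype.card_prod, ZMod.card, ZMod.card, Fintype.card_fin,
      nsmul_eq_mul, hwt]
    push_cast
    field_simp
    ring
  · -- support
    intro w hw j
    have hw' : (∑ p, if W p = w then wt else 0) ≠ 0 := hw
    obtain ⟨p, -, hp⟩ := Finset.exists_ne_zero_of_sum_ne_zero hw'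
    have hpw : W p = w := by
      by_contra hne
      rw [if_neg hne] at hp
      exact hp rfl
    rw [← hpw]
    show rel (tour (p.1 + (cnt p.2.1 p.2.2 ((j.castSucc : Fin (2 * L + 1)) : ℕ) : ZMod L)))
        (tour (p.1 + (cnt p.2.1 p.2.2 ((j.succ : Fin (2 * L + 1)) : ℕ) : ZMod L)))
    have e1 : ((j.castSucc : Fin (2 * L + 1)) : ℕ) = (j : ℕ) := rfl
    have e2 : ((j.succ : Fin (2 * L + 1)) : ℕ) = (j : ℕ) + 1 := rfl
    rw [e1, e2, cnt_succ]
    by_cases h : adv p.2.1 p.2.2 (j : ℕ)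
    · rw [if_pos h]
      have e3 : p.1 + ((cnt p.2.1 p.2.2 (j : ℕ) + 1 : ℕ) : ZMod L)
          = p.1 + (cnt p.2.1 p.2.2 (j : ℕ) : ZMod L) + 1 := by
        push_cast
        ring
      rw [e3]
      exact (hstep _).1
    · rw [if_neg h, add_zero]
      exact hself _
  · -- endpoints
    intro a b
    show (∑ w ∈ Finset.univ.filter
        (fun w : Fin (2 * L + 1) → N => w 0 = a ∧ w (Fin.last (2 * L)) = b),
        ∑ p, if W p = w then wt else 0) = (1 / (Fintype.card N : ℝ)) ^ 2
    rw [Finset.sum_comm]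
    have h1 : ∀ p, (∑ w ∈ Finset.univ.filter
        (fun w : Fin (2 * L + 1) → N => w 0 = a ∧ w (Fin.last (2 * L)) = b),
          if W p = w then wt else 0)
        = if (tour p.1 = a ∧ tour (p.1 + ((sVal L p.2.1 : ℕ) : ZMod L)) = b) then wt else 0 := by
      intro p
      rw [Finset.sum_ite_eq]
      have e0 : W p 0 = tour p.1 := by
        show tour (p.1 + (cnt p.2.1 p.2.2 ((0 : Fin (2 * L + 1)) : ℕ) : ZMod L)) = tour p.1
        rw [Fin.val_zero, cnt_zero, Nat.cast_zero, add_zero]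
      have eL : W p (Fin.last (2 * L)) = tour (p.1 + ((sVal L p.2.1 : ℕ) : ZMod L)) := by
        show tour (p.1 + (cnt p.2.1 p.2.2 ((Fin.last (2 * L)) : ℕ) : ZMod L)) = _
        rw [Fin.val_last, cnt_total]
      simp only [Finset.mem_filter, Finset.mem_univ, true_and, e0, eL]
    rw [Finset.sum_congr rfl fun p _ => h1 p]
    rw [Fintype.sum_prod_type]
    have h2 : ∀ i : ZMod L, (∑ q : Fin (2 * L) × ZMod (2 * L),
        if (tour i = a ∧ tour (i + ((sVal L q.1 : ℕ) : ZMod L)) = b) then wt else 0)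
        = ∑ s : Fin (2 * L),
            if (tour i = a ∧ tour (i + ((sVal L s : ℕ) : ZMod L)) = b)
              then ((2 * L : ℕ) : ℝ) * wt else 0 := by
      intro i
      rw [Fintype.sum_prod_type]
      refine Finset.sum_congr rfl fun s _ => ?_
      show (∑ _r : ZMod (2 * L),
          if (tour i = a ∧ tour (i + ((sVal L s : ℕ) : ZMod L)) = b) then wt else 0) = _
      rw [Finset.sum_const, Finset.card_univ, ZMod.card, nsmul_eq_mul]
      split
      · rfl
      · ring
    rw [Finset.sum_congr rfl fun i _ => h2 i]
    rw [Finset.sum_comm]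
    have h3 : (∑ s : Fin (2 * L), ∑ i : ZMod L,
        if (tour i = a ∧ tour (i + ((sVal L s : ℕ) : ZMod L)) = b)
          then ((2 * L : ℕ) : ℝ) * wt else 0)
        = 2 * ∑ d : ZMod L, ∑ i : ZMod L,
        if (tour i = a ∧ tour (i + d) = b) then ((2 * L : ℕ) : ℝ) * wt else 0 :=
      sum_sVal_cast (fun d => ∑ i : ZMod L,
        if (tour i = a ∧ tour (i + d) = b) then ((2 * L : ℕ) : ℝ) * wt else 0)
    rw [h3, Finset.sum_comm]
    have h4 : ∀ i : ZMod L, (∑ d : ZMod L,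
        if (tour i = a ∧ tour (i + d) = b) then ((2 * L : ℕ) : ℝ) * wt else 0)
        = if tour i = a then
            ((univ.filter fun m : ZMod L => tour m = b).card : ℝ) * (((2 * L : ℕ) : ℝ) * wt)
          else 0 := by
      intro i
      by_cases hA : tour i = a
      · rw [if_pos hA]
        refine (Finset.sum_congr rfl fun d _ => if_congr (and_iff_right hA) rfl rfl).trans ?_
        have e : (∑ d : ZMod L, if tour (i + d) = b then ((2 * L : ℕ) : ℝ) * wt else 0)
            = ∑ m : ZMod L, if tour m = b then ((2 * L : ℕ) : ℝ) * wt else 0 :=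
          Fintype.sum_equiv (Equiv.addLeft i)
            (fun d => if tour (i + d) = b then ((2 * L : ℕ) : ℝ) * wt else 0)
            (fun m => if tour m = b then ((2 * L : ℕ) : ℝ) * wt else 0) (fun d => rfl)
        rw [e, sumIte]
      · rw [if_neg hA]
        refine (Finset.sum_congr rfl fun d _ => if_neg fun hc => hA hc.1).trans
          Finset.sum_const_zero
    rw [Finset.sum_congr rfl fun i _ => h4 i, sumIte, hcA, hcA, hwt]
    push_cast
    field_simp
    ring
  · -- self-loop marginal
    intro j a
    show (∑ w ∈ Finset.univ.filter
        (fun w : Fin (2 * L + 1) → N => w j.castSucc = a ∧ w j.succ = a),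
        ∑ p, if W p = w then wt else 0) = 1 / (2 * (Fintype.card N : ℝ))
    rw [Finset.sum_comm]
    have h1 : ∀ p : ZMod L × Fin (2 * L) × ZMod (2 * L),
        (∑ w ∈ Finset.univ.filter
          (fun w : Fin (2 * L + 1) → N => w j.castSucc = a ∧ w j.succ = a),
          if W p = w then wt else 0)
        = if (¬ adv p.2.1 p.2.2 (j : ℕ)
              ∧ tour (p.1 + (cnt p.2.1 p.2.2 (j : ℕ) : ZMod L)) = a) then wt else 0 := by
      intro p
      rw [Finset.sum_ite_eq]
      simp only [Finset.mem_filter, Finset.mem_univ, true_and]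
      congr 1
      rw [eq_iff_iff]
      have e1 : W p j.castSucc = tour (p.1 + (cnt p.2.1 p.2.2 (j : ℕ) : ZMod L)) := rfl
      have e2 : W p j.succ
          = tour (p.1 + ((cnt p.2.1 p.2.2 (j : ℕ) + (if adv p.2.1 p.2.2 (j : ℕ) then 1 else 0) : ℕ) : ZMod L)) := by
        show tour (p.1 + (cnt p.2.1 p.2.2 ((j : ℕ) + 1) : ZMod L)) = _
        rw [cnt_succ]
      rw [e1, e2]
      constructor
      · rintro ⟨ha1, ha2⟩
        by_cases h : adv p.2.1 p.2.2 (j : ℕ)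
        · exfalso
          rw [if_pos h] at ha2
          have e3 : p.1 + ((cnt p.2.1 p.2.2 (j : ℕ) + 1 : ℕ) : ZMod L)
              = p.1 + (cnt p.2.1 p.2.2 (j : ℕ) : ZMod L) + 1 := by push_cast; ring
          rw [e3] at ha2
          exact (hstep (p.1 + (cnt p.2.1 p.2.2 (j : ℕ) : ZMod L))).2 (ha1.trans ha2.symm)
        · exact ⟨h, ha1⟩
      · rintro ⟨h, ha⟩
        rw [if_neg h, add_zero]
        exact ⟨ha, ha⟩
    rw [Finset.sum_congr rfl fun p _ => h1 p]
    rw [Fintype.sum_prod_type, Finset.sum_comm, Fintype.sum_prod_type]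
    -- now: ∑ s ∑ r ∑ i, ite (¬adv ∧ tour (i + c) = a) wt 0
    have h2 : ∀ (s : Fin (2 * L)) (r : ZMod (2 * L)), (∑ i : ZMod L,
        if (¬ adv s r (j : ℕ) ∧ tour (i + (cnt s r (j : ℕ) : ZMod L)) = a) then wt else 0)
        = if ¬ adv s r (j : ℕ) then ((L : ℝ) / (Fintype.card N : ℝ)) * wt else 0 := by
      intro s r
      by_cases h : adv s r (j : ℕ)
      · rw [if_neg (not_not_intro h)]
        exact (Finset.sum_congr rfl fun i _ => if_neg fun hc => hc.1 h).trans
          Finset.sum_const_zero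
      · rw [if_pos h]
        refine (Finset.sum_congr rfl fun i _ => if_congr (and_iff_right h) rfl rfl).trans ?_
        have e : (∑ i : ZMod L, if tour (i + (cnt s r (j : ℕ) : ZMod L)) = a then wt else 0)
            = ∑ m : ZMod L, if tour m = a then wt else 0 :=
          Fintype.sum_equiv (Equiv.addRight ((cnt s r (j : ℕ) : ZMod L)))
            (fun i => if tour (i + (cnt s r (j : ℕ) : ZMod L)) = a then wt else 0)
            (fun m => if tour m = a then wt else 0) (fun i => rfl)
        rw [e, sumIte, hcA]
    have h2' : ∀ s : Fin (2 * L), (∑ r : ZMod (2 * L), ∑ i : ZMod L,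
        if (¬ adv s r (j : ℕ) ∧ tour (i + (cnt s r (j : ℕ) : ZMod L)) = a) then wt else 0)
        = ((2 * L - sVal L s : ℕ) : ℝ) * (((L : ℝ) / (Fintype.card N : ℝ)) * wt) := by
      intro s
      rw [Finset.sum_congr rfl fun r _ => h2 s r, sumIteRn]
    rw [Finset.sum_congr rfl fun s _ => h2' s, ← Finset.sum_mul, ← Nat.cast_sum,
      sum_sVal_compl, hwt]
    push_cast
    field_simp
    ring
  · -- edge marginal
    intro j a b hab hne
    show (∑ w ∈ Finset.univ.filter
        (fun w : Fin (2 * L + 1) → N => w j.castSucc = a ∧ w j.succ = b),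
        ∑ p, if W p = w then wt else 0) = 1 / (2 * (L : ℝ))
    rw [Finset.sum_comm]
    have h1 : ∀ p : ZMod L × Fin (2 * L) × ZMod (2 * L),
        (∑ w ∈ Finset.univ.filter
          (fun w : Fin (2 * L + 1) → N => w j.castSucc = a ∧ w j.succ = b),
          if W p = w then wt else 0)
        = if (adv p.2.1 p.2.2 (j : ℕ)
              ∧ (tour (p.1 + (cnt p.2.1 p.2.2 (j : ℕ) : ZMod L)) = a
                ∧ tour (p.1 + (cnt p.2.1 p.2.2 (j : ℕ) : ZMod L) + 1) = b)) then wt else 0 := by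
      intro p
      rw [Finset.sum_ite_eq]
      simp only [Finset.mem_filter, Finset.mem_univ, true_and]
      congr 1
      rw [eq_iff_iff]
      have e1 : W p j.castSucc = tour (p.1 + (cnt p.2.1 p.2.2 (j : ℕ) : ZMod L)) := rfl
      have e2 : W p j.succ
          = tour (p.1 + ((cnt p.2.1 p.2.2 (j : ℕ) + (if adv p.2.1 p.2.2 (j : ℕ) then 1 else 0) : ℕ) : ZMod L)) := by
        show tour (p.1 + (cnt p.2.1 p.2.2 ((j : ℕ) + 1) : ZMod L)) = _
        rw [cnt_succ]
      have e3 : p.1 + ((cnt p.2.1 p.2.2 (j : ℕ) + 1 : ℕ) : ZMod L)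
          = p.1 + (cnt p.2.1 p.2.2 (j : ℕ) : ZMod L) + 1 := by push_cast; ring
      rw [e1, e2]
      constructor
      · rintro ⟨ha1, ha2⟩
        by_cases h : adv p.2.1 p.2.2 (j : ℕ)
        · rw [if_pos h, e3] at ha2
          exact ⟨h, ha1, ha2⟩
        · exfalso
          rw [if_neg h, add_zero] at ha2
          exact hne (ha1.symm.trans ha2)
      · rintro ⟨h, ha1, ha2⟩
        rw [if_pos h, e3]
        exact ⟨ha1, ha2⟩
    rw [Finset.sum_congr rfl fun p _ => h1 p]
    rw [Fintype.sum_prod_type, Finset.sum_comm, Fintype.sum_prod_type]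
    have h2 : ∀ (s : Fin (2 * L)) (r : ZMod (2 * L)), (∑ i : ZMod L,
        if (adv s r (j : ℕ)
            ∧ (tour (i + (cnt s r (j : ℕ) : ZMod L)) = a
              ∧ tour (i + (cnt s r (j : ℕ) : ZMod L) + 1) = b)) then wt else 0)
        = if adv s r (j : ℕ) then wt else 0 := by
      intro s r
      by_cases h : adv s r (j : ℕ)
      · rw [if_pos h]
        refine (Finset.sum_congr rfl fun i _ => if_congr (and_iff_right h) rfl rfl).trans ?_
        have e : (∑ i : ZMod L,
            if (tour (i + (cnt s r (j : ℕ) : ZMod L)) = a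
              ∧ tour (i + (cnt s r (j : ℕ) : ZMod L) + 1) = b) then wt else 0)
            = ∑ m : ZMod L, if (tour m = a ∧ tour (m + 1) = b) then wt else 0 :=
          Fintype.sum_equiv (Equiv.addRight ((cnt s r (j : ℕ) : ZMod L)))
            (fun i => if (tour (i + (cnt s r (j : ℕ) : ZMod L)) = a
              ∧ tour (i + (cnt s r (j : ℕ) : ZMod L) + 1) = b) then wt else 0)
            (fun m => if (tour m = a ∧ tour (m + 1) = b) then wt else 0) (fun i => rfl)
        rw [e, sumIte, hedge a b hab hne, Nat.cast_one, one_mul]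
      · rw [if_neg h]
        exact (Finset.sum_congr rfl fun i _ => if_neg fun hc => h hc.1).trans
          Finset.sum_const_zero
    have h2' : ∀ s : Fin (2 * L), (∑ r : ZMod (2 * L), ∑ i : ZMod L,
        if (adv s r (j : ℕ)
            ∧ (tour (i + (cnt s r (j : ℕ) : ZMod L)) = a
              ∧ tour (i + (cnt s r (j : ℕ) : ZMod L) + 1) = b)) then wt else 0)
        = ((sVal L s : ℕ) : ℝ) * wt := by
      intro s
      rw [Finset.sum_congr rfl fun r _ => h2 s r, sumIteR]
    rw [Finset.sum_congr rfl fun s _ => h2' s, ← Finset.sum_mul, ← Nat.cast_sum,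
      sum_sVal, hwt]
    push_cast
    field_simp
    ring
end
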